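/- Let X be a Banach space, D a weak neighborhood basis at 0 in X, and P a property of finite sequences in X that is closed under taking initial segments. Then exactly one of the following holds: (i) for every normally weakly null collection (x_t)_{t∈D^{<ℕ}} ⊆ B_X, the set of t ∈ D^{<ℕ} such that (x_{t|_i})_{i=1}^{|t|} has P is big; (ii) there exists a normally weakly null collection (x_t)_{t∈D^{<ℕ}} ⊆ B_X such that for every infinite branch t ∈ D^ℕ, some finite initial segment of (x_{t|_i})_i fails P. -/
import Mathlib


open Filter

variable {D : Type*} [Preorder D]

/-- A subset of a directed set is cofinal if every element has an upper bound in it. -/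
def Cofinal (S : Set D) : Prop := ∀ u : D, ∃ v ∈ S, u ≤ v

/-- A subset is eventual if its complement is not cofinal. -/
def Eventual (S : Set D) : Prop := ¬ Cofinal Sᶜ

/-- Inevitable subsets of the tree of nonempty finite sequences from `D`. -/
def Inevitable (B : Set (List D)) : Prop :=
  Eventual {u : D | [u] ∈ B} ∧
    ∀ t ∈ B, t ≠ [] → Eventual {u : D | t ++ [u] ∈ B}

/-- A set of finite sequences is big if it contains an inevitable subset. -/
def Big (B : Set (List D)) : Prop := ∃ B' : Set (List D), B' ⊆ B ∧ Inevitable B'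

variable {X : Type*} [NormedAddCommGroup X] [NormedSpace ℝ X]

/-- A collection `(x_t)` indexed by nonempty finite sequences from `D` (where `ν u` is
the weak neighborhood of `0` associated to `u ∈ D`) is normally weakly null and
contained in `B_X` if for `t = (u_1, …, u_n)` one has `x_t ∈ B_X ∩ ν u_n`. -/
def NormallyWeaklyNull (ν : D → Set X) (x : List D → X) : Prop :=
  ∀ (t : List D) (u : D), ‖x (t ++ [u])‖ ≤ 1 ∧ x (t ++ [u]) ∈ ν u

/-- The finite sequence `(x_{t|_1}, …, x_{t|_n})` of values along the initial
segments of `t`. -/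
def branchSeq (x : List D → X) (t : List D) : List X :=
  (List.range t.length).map fun i => x (t.take (i + 1))

/-- Let `X` be a Banach space, `D` a weak neighborhood basis at `0` in `X` (ordered by
reverse inclusion), and `P` a property of finite sequences in `X` closed under taking
initial segments. Then exactly one of the following holds: (i) for every normally
weakly null collection `(x_t)_{t ∈ D^{<ℕ}} ⊆ B_X`, the set of `t` such that
`(x_{t|_i})_{i ≤ |t|}` has `P` is big; (ii) there is a normally weakly null collection
`(x_t)_{t ∈ D^{<ℕ}} ⊆ B_X` such that along every infinite branch some finite initial
segment of the values fails `P`. -/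
lemma eventual_mem {S : Set D} (h : Eventual S) : ∃ u, u ∈ S ∧ ∀ v, u ≤ v → v ∈ S := by
  unfold Eventual Cofinal at h
  push_neg at h
  obtain ⟨u, hu⟩ := h
  have key : ∀ v, u ≤ v → v ∈ S := fun v hv => by
    by_contra hvS; exact hu v hvS hv
  exact ⟨u, key u le_rfl, key⟩

inductive Escape (B : Set (List D)) : List D → Prop where
  | base (t : List D) : t ∉ B → Escape B t
  | step (t : List D) (f : D → D) (hf : ∀ u, u ≤ f u)
      (h : ∀ u, Escape B (t ++ [f u])) : Escape B t

lemma escape_of_cofinal {B : Set (List D)} {t : List D}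
    (h : ∀ u : D, ∃ v, u ≤ v ∧ Escape B (t ++ [v])) : Escape B t := by
  choose f hf he using h
  exact Escape.step t f hf he

lemma not_escape {B : Set (List D)} {t : List D} (h : ¬ Escape B t) :
    t ∈ B ∧ ∃ u₀ : D, ∀ v, u₀ ≤ v → ¬ Escape B (t ++ [v]) := by
  constructor
  · by_contra ht; exact h (Escape.base t ht)
  · by_contra hc
    push_neg at hc
    exact h (escape_of_cofinal hc)

lemma escape_lemma (B : Set (List D))
    {t : List D} (h : Escape B t) :
    ∃ φ : List D → List D, φ [] = t ∧
      (∀ s u, ∃ w, u ≤ w ∧ φ (s ++ [u]) = φ s ++ [w]) ∧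
      ∀ v : ℕ → D, ∃ n, φ ((List.range n).map v) ∉ B := by
  induction h with
  | base t ht =>
    exact ⟨fun s => t ++ s, by simp, fun s u => ⟨u, le_rfl, (List.append_assoc ..).symm⟩,
      fun v => ⟨0, by simpa using ht⟩⟩
  | step t f hf h ih =>
    choose φ hφ0 hφstep hφbranch using ih
    refine ⟨fun s => match s with | [] => t | u :: s' => φ u s', rfl, ?_, ?_⟩
    · intro s u
      match s with
      | [] => exact ⟨f u, hf u, by simp [hφ0]⟩
      | u₀ :: s' =>
        obtain ⟨w, hw, he⟩ := hφstep u₀ s' u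
        exact ⟨w, hw, by simpa using he⟩
    · intro v
      obtain ⟨m, hm⟩ := hφbranch (v 0) (fun i => v (i + 1))
      refine ⟨m + 1, ?_⟩
      have hr : (List.range (m+1)).map v = v 0 :: (List.range m).map (fun i => v (i+1)) := by
        rw [List.range_succ_eq_map]; simp [Function.comp]
      rw [hr]
      exact hm

lemma ofFn_eq_map_range {α : Type*} (v : ℕ → α) (n : ℕ) :
    List.ofFn (fun i : Fin n => v i) = (List.range n).map v := by
  apply List.ext_getElem (by simp)
  intro i h1 h2
  simp

lemma branchSeq_take (x : List D → X) (t s : List D) :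
    branchSeq x t = (branchSeq x (t ++ s)).take t.length := by
  unfold branchSeq
  rw [← List.map_take, List.take_range]
  have : min t.length (t ++ s).length = t.length := by simp
  rw [this]
  apply List.map_congr_left
  intro i hi
  rw [List.mem_range] at hi
  rw [List.take_append_of_le_length (by omega)]

lemma branchSeq_prefix (x : List D → X) (t s : List D) :
    branchSeq x t <+: branchSeq x (t ++ s) := by
  rw [branchSeq_take x t s]; exact List.take_prefix _ _

/- ## Properties of the pruning map φ -/

section Phi
variable (φ : List D → List D) (hφ0 : φ [] = [])
  (hφstep : ∀ s u, ∃ w, u ≤ w ∧ φ (s ++ [u]) = φ s ++ [w])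

include hφ0 hφstep

lemma phi_len : ∀ l : List D, (φ l).length = l.length := by
  intro l
  induction l using List.reverseRecOn with
  | nil => simp [hφ0]
  | append_singleton l u ih =>
    obtain ⟨w, _, he⟩ := hφstep l u
    simp [he, ih]

omit hφ0 in
lemma phi_mono : ∀ l s : List D, φ l <+: φ (l ++ s) := by
  intro l s
  induction s using List.reverseRecOn with
  | nil => simp
  | append_singleton s u ih =>
    obtain ⟨w, _, he⟩ := hφstep (l ++ s) u
    rw [← List.append_assoc, he]
    exact ih.trans (List.prefix_append _ _)

lemma phi_take : ∀ (l : List D) (k : ℕ), k ≤ l.length → φ (l.take k) = (φ l).take k := by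
  intro l k hk
  have h1 : φ (l.take k) <+: φ l := by
    have := phi_mono φ hφstep (l.take k) (l.drop k)
    rwa [List.take_append_drop] at this
  have h2 : (φ (l.take k)).length = k := by
    rw [phi_len φ hφ0 hφstep]; simp [hk]
  rw [List.prefix_iff_eq_take] at h1
  rw [h1, h2]

lemma branchSeq_phi (x : List D → X) (l : List D) :
    branchSeq (fun s => x (φ s)) l = branchSeq x (φ l) := by
  unfold branchSeq
  rw [phi_len φ hφ0 hφstep]
  apply List.map_congr_left
  intro i hi
  rw [List.mem_range] at hi
  show x (φ (List.take (i + 1) l)) = x (List.take (i + 1) (φ l))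
  rw [phi_take φ hφ0 hφstep l (i + 1) (by omega)]

end Phi

theorem tree_dichotomy [CompleteSpace X] (ν : D → Set X)
    (hle : ∀ u v : D, u ≤ v ↔ ν v ⊆ ν u)
    (hnbhd : ∀ u : D, ∃ s : Finset (X →L[ℝ] ℝ), ∃ ε : ℝ, 0 < ε ∧
      {x : X | ∀ f ∈ s, |f x| < ε} ⊆ ν u)
    (hbasis : ∀ (s : Finset (X →L[ℝ] ℝ)) (ε : ℝ), 0 < ε →
      ∃ u : D, ν u ⊆ {x : X | ∀ f ∈ s, |f x| < ε})
    (P : List X → Prop) (hP : ∀ l l' : List X, l <+: l' → P l' → P l) :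
    Xor'
      (∀ x : List D → X, NormallyWeaklyNull ν x → Big {t : List D | P (branchSeq x t)})
      (∃ x : List D → X, NormallyWeaklyNull ν x ∧
        ∀ v : ℕ → D, ∃ n : ℕ,
          ¬ P (branchSeq x (List.ofFn fun i : Fin (n + 1) => v i))) := by
  rcases Classical.em
      (∀ x : List D → X, NormallyWeaklyNull ν x → Big {t : List D | P (branchSeq x t)})
    with hA | hA
  · -- (i) holds; show ¬(ii)
    refine Or.inl ⟨hA, ?_⟩
    rintro ⟨y, hy, hbr⟩
    obtain ⟨B', hB'sub, hInev⟩ := hA y hy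
    obtain ⟨u₀, hu₀, -⟩ := eventual_mem hInev.1
    -- extension choice function
    have hext : ∀ t : List D, ∃ u, (t ≠ [] → t ∈ B' → t ++ [u] ∈ B') := by
      intro t
      by_cases h1 : t ≠ [] ∧ t ∈ B'
      · obtain ⟨u, hu, -⟩ := eventual_mem (hInev.2 t h1.2 h1.1)
        exact ⟨u, fun _ _ => hu⟩
      · exact ⟨u₀, fun h2 h3 => absurd ⟨h2, h3⟩ h1⟩
    choose c hc using hext
    set L : ℕ → List D := fun n => Nat.rec [u₀] (fun _ l => l ++ [c l]) n with hL
    have hL0 : L 0 = [u₀] := rfl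
    have hLs : ∀ n, L (n + 1) = L n ++ [c (L n)] := fun n => rfl
    have hLmem : ∀ n, L n ∈ B' ∧ (L n).length = n + 1 := by
      intro n
      induction n with
      | zero => exact ⟨hu₀, rfl⟩
      | succ n ih =>
        rw [hLs]
        refine ⟨hc (L n) ?_ ih.1, by simp [ih.2]⟩
        intro h; rw [h] at ih; simpa using ih.2
    set v : ℕ → D := fun n => Nat.rec u₀ (fun m _ => c (L m)) n with hv
    have hLv : ∀ n, L n = (List.range (n + 1)).map v := by
      intro n
      induction n with
      | zero =>
        have h0 : v 0 = u₀ := rfl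
        simp [hL0, List.range_succ, h0]
      | succ n ih =>
        have h1 : v (n + 1) = c (L n) := rfl
        rw [hLs n, List.range_succ, List.map_append, ← ih]
        simp [h1]
    obtain ⟨n, hn⟩ := hbr v
    apply hn
    have : (List.ofFn fun i : Fin (n + 1) => v i) = L n := by
      rw [ofFn_eq_map_range, hLv]
    rw [this]
    exact hB'sub (hLmem n).1
  · -- (i) fails; construct witness for (ii)
    push_neg at hA
    obtain ⟨x, hx, hnb⟩ := hA
    set B : Set (List D) := {t : List D | P (branchSeq x t)} with hBdef
    have hBco : ∀ t s, t ∉ B → t ++ s ∉ B := by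
      intro t s ht hts
      exact ht (hP _ _ (branchSeq_prefix x t s) hts)
    -- root cofinality of Escape
    have hroot : ∀ u : D, ∃ v, u ≤ v ∧ Escape B ([] ++ [v]) := by
      by_contra hc
      push_neg at hc
      obtain ⟨u, hu⟩ := hc
      apply hnb
      refine ⟨{t | t ≠ [] ∧ ¬ Escape B t}, fun t ht => (not_escape ht.2).1, ?_, ?_⟩
      · intro hcf
        obtain ⟨w, hw1, hw2⟩ := hcf u
        simp only [Set.mem_compl_iff, Set.mem_setOf_eq, not_and, not_not] at hw1
        exact hu w hw2 (by simpa using hw1 (by simp))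
      · intro t ht htne
        obtain ⟨-, w₀, hw₀⟩ := not_escape ht.2
        intro hcf
        obtain ⟨w, hw1, hw2⟩ := hcf w₀
        simp only [Set.mem_compl_iff, Set.mem_setOf_eq, not_and, not_not] at hw1
        exact hw₀ w hw2 (hw1 (by simp))
    have hesc : Escape B ([] : List D) := escape_of_cofinal hroot
    obtain ⟨φ, hφ0, hφstep, hφbranch⟩ := escape_lemma B hesc
    refine Or.inr ⟨⟨fun s => x (φ s), ?_, ?_⟩, fun hAA => absurd (hAA x hx) hnb⟩
    · intro t u
      obtain ⟨w, hw, he⟩ := hφstep t u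
      show ‖x (φ (t ++ [u]))‖ ≤ 1 ∧ x (φ (t ++ [u])) ∈ ν u
      rw [he]
      exact ⟨(hx (φ t) w).1, (hle u w).mp hw (hx (φ t) w).2⟩
    · intro v
      obtain ⟨n, hn⟩ := hφbranch v
      refine ⟨n, ?_⟩
      rw [ofFn_eq_map_range, branchSeq_phi φ hφ0 hφstep]
      have hr : (List.range (n + 1)).map v = (List.range n).map v ++ [v n] := by
        rw [List.range_succ, List.map_append]; rfl
      rw [hr]
      obtain ⟨w, hw, he⟩ := hφstep ((List.range n).map v) (v n)
      rw [he]
      exact fun hp => hBco _ [w] hn hp
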